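/- Let M ≥ 2 be an integer. Let X, X₂, …, X_M be identically distributed random elements of a measurable space 𝒳, let Y be a random element of a measurable space 𝒴 jointly distributed with X, and assume that X₂, …, X_M are mutually independent, each distributed as X, and that the vector (X₂,…,X_M) is independent of the pair (X, Y). Let q : 𝒳 × 𝒴 → [0,∞) be measurable and define g(x,y) = P[q(X̄, y) ≥ q(x, y)], where X̄ is a random element with the same law as X. Then P[∃ j ∈ {2,…,M} : q(X_j, Y) ≥ q(X, Y)] ≤ E[min{1, (M−1)·g(X,Y)}]. -/

import Mathlib

open MeasureTheory ProbabilityTheory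
open scoped ENNReal

/-- **Random-coding union (RCU) bound.**
A codebook of `M` i.i.d. codewords is used: `X` is the transmitted codeword, `Y` the channel
output, and `C j`, `j = 1, …, M-1`, are the `M - 1` competing codewords `X₂, …, X_M`, each
distributed as `X`, mutually independent, and (as a vector) independent of the pair `(X, Y)`.
With `g x y = P[q(X̄, y) ≥ q(x, y)]` (where `X̄` has the law of `X`), the probability that some
competing codeword achieves a metric at least as large as that of `X` is bounded by
`E[min{1, (M−1)·g(X,Y)}]`. -/
theorem rcu_bound
    {Ω 𝒳 𝒴 : Type*} [MeasurableSpace Ω] [MeasurableSpace 𝒳] [MeasurableSpace 𝒴]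
    (P : Measure Ω) [IsProbabilityMeasure P]
    (M : ℕ) (hM : 2 ≤ M)
    (X : Ω → 𝒳) (Y : Ω → 𝒴) (C : Fin (M - 1) → Ω → 𝒳)
    (hX : Measurable X) (hY : Measurable Y) (hC : ∀ j, Measurable (C j))
    (hident : ∀ j, Measure.map (C j) P = Measure.map X P)
    (hCindep : iIndepFun C P)
    (hCXY : IndepFun (fun ω => fun j => C j ω) (fun ω => (X ω, Y ω)) P)
    (q : 𝒳 × 𝒴 → ℝ) (hq : Measurable q) (hqnonneg : ∀ p, 0 ≤ q p)
    (g : 𝒳 → 𝒴 → ℝ≥0∞)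
    (hg : ∀ x y, g x y = (Measure.map X P) {x' | q (x, y) ≤ q (x', y)}) :
    P {ω | ∃ j, q (X ω, Y ω) ≤ q (C j ω, Y ω)} ≤
      ∫⁻ ω, min 1 ((M - 1 : ℕ) * g (X ω) (Y ω)) ∂P := by
  set W : Ω → 𝒳 × 𝒴 := fun ω => (X ω, Y ω) with hW
  set Z : Ω → (Fin (M - 1) → 𝒳) := fun ω => fun j => C j ω with hZ
  have hWm : Measurable W := hX.prodMk hY
  have hZm : Measurable Z := measurable_pi_lambda _ hC
  set S : Set ((𝒳 × 𝒴) × (Fin (M - 1) → 𝒳)) :=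
    {p | ∃ j, q p.1 ≤ q (p.2 j, p.1.2)} with hS
  have hSj : ∀ j : Fin (M - 1),
      MeasurableSet {p : (𝒳 × 𝒴) × (Fin (M - 1) → 𝒳) | q p.1 ≤ q (p.2 j, p.1.2)} := by
    intro j
    exact measurableSet_le (hq.comp measurable_fst)
      (hq.comp (((measurable_pi_apply j).comp measurable_snd).prodMk
        (measurable_snd.comp measurable_fst)))
  have hSm : MeasurableSet S := by
    have : S = ⋃ j, {p : (𝒳 × 𝒴) × (Fin (M - 1) → 𝒳) | q p.1 ≤ q (p.2 j, p.1.2)} := by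
      ext p; simp [hS]
    rw [this]; exact MeasurableSet.iUnion hSj
  haveI hμZ : IsProbabilityMeasure (Measure.map Z P) :=
    Measure.isProbabilityMeasure_map hZm.aemeasurable
  haveI hμW : IsProbabilityMeasure (Measure.map W P) :=
    Measure.isProbabilityMeasure_map hWm.aemeasurable
  have hindep : Measure.map (fun ω => (W ω, Z ω)) P
      = (Measure.map W P).prod (Measure.map Z P) :=
    (indepFun_iff_map_prod_eq_prod_map_map hWm.aemeasurable hZm.aemeasurable).mp hCXY.symm
  have hevent : {ω | ∃ j, q (X ω, Y ω) ≤ q (C j ω, Y ω)}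
      = (fun ω => (W ω, Z ω)) ⁻¹' S := rfl
  rw [hevent, ← Measure.map_apply (hWm.prodMk hZm) hSm, hindep, Measure.prod_apply hSm]
  -- measurability of the integrand
  have hTm : MeasurableSet {p : (𝒳 × 𝒴) × 𝒳 | q p.1 ≤ q (p.2, p.1.2)} :=
    measurableSet_le (hq.comp measurable_fst)
      (hq.comp (measurable_snd.prodMk (measurable_snd.comp measurable_fst)))
  have hgm : Measurable fun w : 𝒳 × 𝒴 => g w.1 w.2 := by
    have h1 : Measurable fun w : 𝒳 × 𝒴 =>
        (Measure.map X P) (Prod.mk w ⁻¹' {p : (𝒳 × 𝒴) × 𝒳 | q p.1 ≤ q (p.2, p.1.2)}) :=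
      measurable_measure_prodMk_left hTm
    have : (fun w : 𝒳 × 𝒴 => g w.1 w.2) = fun w : 𝒳 × 𝒴 =>
        (Measure.map X P) (Prod.mk w ⁻¹' {p : (𝒳 × 𝒴) × 𝒳 | q p.1 ≤ q (p.2, p.1.2)}) := by
      funext w
      rw [hg w.1 w.2]
      congr 1
    rw [this]; exact h1
  have hfm : Measurable fun w : 𝒳 × 𝒴 => min 1 ((M - 1 : ℕ) * g w.1 w.2) :=
    measurable_const.min (measurable_const.mul hgm)
  calc ∫⁻ w, (Measure.map Z P) (Prod.mk w ⁻¹' S) ∂(Measure.map W P)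
      ≤ ∫⁻ w, min 1 ((M - 1 : ℕ) * g w.1 w.2) ∂(Measure.map W P) := by
        refine lintegral_mono fun w => le_min prob_le_one ?_
        have hsub : Prod.mk w ⁻¹' S ⊆ ⋃ j : Fin (M - 1),
            (fun c : Fin (M - 1) → 𝒳 => c j) ⁻¹' {x' | q (w.1, w.2) ≤ q (x', w.2)} := by
          intro c hc
          obtain ⟨j, hj⟩ := hc
          exact Set.mem_iUnion.mpr ⟨j, by simpa using hj⟩
        refine le_trans (measure_mono hsub) ?_
        refine le_trans (measure_iUnion_le _) ?_
        have hjj : ∀ j : Fin (M - 1),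
            (Measure.map Z P) ((fun c : Fin (M - 1) → 𝒳 => c j) ⁻¹'
              {x' | q (w.1, w.2) ≤ q (x', w.2)}) = g w.1 w.2 := by
          intro j
          have hmapj : Measure.map (fun c : Fin (M - 1) → 𝒳 => c j) (Measure.map Z P)
              = Measure.map (C j) P := by
            rw [Measure.map_map (measurable_pi_apply j) hZm]; rfl
          have hs' : MeasurableSet {x' : 𝒳 | q (w.1, w.2) ≤ q (x', w.2)} :=
            measurableSet_le measurable_const
              (hq.comp (measurable_id.prodMk measurable_const))
          rw [← Measure.map_apply (measurable_pi_apply j) hs', hmapj, hident j, hg w.1 w.2]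
        rw [ENNReal.tsum_eq_iSup_sum]
        refine iSup_le fun s => ?_
        calc ∑ j ∈ s, (Measure.map Z P) ((fun c : Fin (M - 1) → 𝒳 => c j) ⁻¹'
                {x' | q (w.1, w.2) ≤ q (x', w.2)})
            = ∑ _j ∈ s, g w.1 w.2 := by
              exact Finset.sum_congr rfl fun j _ => hjj j
          _ = s.card * g w.1 w.2 := by
              rw [Finset.sum_const, nsmul_eq_mul]
          _ ≤ (M - 1 : ℕ) * g w.1 w.2 := by
              refine mul_le_mul_left ?_ _
              have : s.card ≤ M - 1 := by
                simpa using Finset.card_le_card (Finset.subset_univ s)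
              exact_mod_cast this
    _ = ∫⁻ ω, min 1 ((M - 1 : ℕ) * g (X ω) (Y ω)) ∂P := by
        rw [lintegral_map hfm hWm]
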